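/- The Wardrop equilibrium set W* = P⁻¹(y*) ∩ Δ is a nonempty convex polytope with dim(W*) ≤ red(Q), where red(Q) = dim(ker Q); moreover if W* contains a point in the interior of Δ then dim(W*) = red(Q). -/

import Mathlib

/-- The Wardrop set `W* = P⁻¹(y*) ∩ Δ` is a nonempty convex polytope
with `dim W* ≤ red(Q) = dim (ker Q)`, and `dim W* = red(Q)` whenever `W*` contains
a point in the interior of `Δ`. -/
theorem stmt3 {ι : Type*} [Fintype ι] {A : ι → Type*} [∀ i, Fintype (A i)]
    {E : Type*} [Fintype E]
    (ρ : ι → ℝ) (hρ : ∀ i, 0 < ρ i)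
    (φ : E → ℝ → ℝ) (hmono : ∀ r, StrictMono (φ r)) (hcont : ∀ r, Continuous (φ r))
    (P : ((Σ i, A i) → ℝ) →ₗ[ℝ] (E → ℝ))
    (Δset : Set ((Σ i, A i) → ℝ))
    (hΔ : Δset = {x | (∀ a, 0 ≤ x a) ∧ ∀ i, ∑ α : A i, x ⟨i, α⟩ = ρ i})
    (Z : Submodule ℝ ((Σ i, A i) → ℝ))
    (hZ : ∀ z, z ∈ Z ↔ ∀ i, ∑ α : A i, z ⟨i, α⟩ = 0)
    (Φ : (E → ℝ) → ℝ)
    (hΦ : ∀ y, Φ y = ∑ r, ∫ w in (0:ℝ)..(y r), φ r w)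
    (ystar : E → ℝ)
    (hyΔ : ystar ∈ P '' Δset)
    (hymin : ∀ y ∈ P '' Δset, y ≠ ystar → Φ ystar < Φ y)
    (Wstar : Set ((Σ i, A i) → ℝ))
    (hW : Wstar = {x ∈ Δset | P x = ystar}) :
    Wstar.Nonempty ∧ Convex ℝ Wstar ∧
      Module.finrank ℝ (vectorSpan ℝ Wstar) ≤
        Module.finrank ℝ (LinearMap.ker (P.domRestrict Z)) ∧
      ((∃ q ∈ Wstar, ∀ a, 0 < q a) →
        Module.finrank ℝ (vectorSpan ℝ Wstar) =
          Module.finrank ℝ (LinearMap.ker (P.domRestrict Z))) := by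
  -- K is the "kernel of Q" viewed inside the ambient space.
  set K : Submodule ℝ ((Σ i, A i) → ℝ) := Z ⊓ LinearMap.ker P with hK
  have hKrank : Module.finrank ℝ K = Module.finrank ℝ (LinearMap.ker (P.domRestrict Z)) := by
    have h1 : LinearMap.ker (P.domRestrict Z) = Submodule.comap Z.subtype (LinearMap.ker P) := by
      ext v; simp [LinearMap.mem_ker]
    have h2 : Submodule.map Z.subtype (Submodule.comap Z.subtype (LinearMap.ker P))
        = Z ⊓ LinearMap.ker P := Submodule.map_comap_subtype _ _
    rw [h1, ← Submodule.finrank_map_subtype_eq Z, h2]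
  -- differences of elements of Wstar lie in K
  have hdiff : ∀ x ∈ Wstar, ∀ y ∈ Wstar, x - y ∈ K := by
    intro x hx y hy
    rw [hW] at hx hy
    obtain ⟨hxΔ, hxP⟩ := hx
    obtain ⟨hyΔ', hyP⟩ := hy
    rw [hΔ] at hxΔ hyΔ'
    refine Submodule.mem_inf.mpr ⟨?_, ?_⟩
    · rw [hZ]
      intro i
      have : ∑ α : A i, (x ⟨i, α⟩ - y ⟨i, α⟩) = (∑ α : A i, x ⟨i, α⟩) - ∑ α : A i, y ⟨i, α⟩ :=
        Finset.sum_sub_distrib _ _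
      simpa [hxΔ.2 i, hyΔ'.2 i] using this
    · simp [LinearMap.mem_ker, map_sub, hxP, hyP]
  have hspanle : vectorSpan ℝ Wstar ≤ K := by
    rw [vectorSpan_def]
    rw [Submodule.span_le]
    rintro v hv
    rw [Set.mem_vsub] at hv
    obtain ⟨x, hx, y, hy, rfl⟩ := hv
    exact hdiff x hx y hy
  refine ⟨?_, ?_, ?_, ?_⟩
  · obtain ⟨x, hx, hPx⟩ := hyΔ
    exact ⟨x, by rw [hW]; exact ⟨hx, hPx⟩⟩
  · intro x hx y hy a b ha hb hab
    rw [hW] at hx hy ⊢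
    obtain ⟨hxΔ, hxP⟩ := hx
    obtain ⟨hyΔ', hyP⟩ := hy
    rw [hΔ] at hxΔ hyΔ'
    refine ⟨?_, ?_⟩
    · rw [hΔ]
      constructor
      · intro c
        have := hxΔ.1 c
        have := hyΔ'.1 c
        have hax : 0 ≤ a * x c := mul_nonneg ha (hxΔ.1 c)
        have hby : 0 ≤ b * y c := mul_nonneg hb (hyΔ'.1 c)
        simpa [Pi.add_apply, Pi.smul_apply, smul_eq_mul] using add_nonneg hax hby
      · intro i
        have : ∑ α : A i, (a * x ⟨i, α⟩ + b * y ⟨i, α⟩)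
            = a * (∑ α : A i, x ⟨i, α⟩) + b * ∑ α : A i, y ⟨i, α⟩ := by
          rw [Finset.sum_add_distrib, Finset.mul_sum, Finset.mul_sum]
        have h2 : a * ρ i + b * ρ i = ρ i := by
          rw [← add_mul, hab, one_mul]
        simpa [Pi.add_apply, Pi.smul_apply, smul_eq_mul, hxΔ.2 i, hyΔ'.2 i, h2] using this
    · have : P (a • x + b • y) = a • P x + b • P y := by
        simp [map_add, map_smul]
      rw [this, hxP, hyP, ← add_smul, hab, one_smul]
  · rw [← hKrank]
    exact Submodule.finrank_mono hspanle
  · rintro ⟨q, hq, hqpos⟩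
    rw [← hKrank]
    refine le_antisymm (Submodule.finrank_mono hspanle) (Submodule.finrank_mono ?_)
    intro v hv
    rcases isEmpty_or_nonempty (Σ i, A i) with hemp | hne
    · have : v = 0 := funext fun a => (hemp.false a).elim
      rw [this]; exact Submodule.zero_mem _
    -- choose ε > 0 with q a + ε * v a ≥ 0 for all a
    obtain ⟨hvZ, hvP⟩ := hv
    set ε : ℝ := Finset.univ.inf' (Finset.univ_nonempty) (fun a => q a / (|v a| + 1)) with hε
    have hεpos : 0 < ε := by
      apply Finset.lt_inf'_iff _ |>.mpr
      intro a _
      exact div_pos (hqpos a) (by positivity)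
    have hεle : ∀ a, ε ≤ q a / (|v a| + 1) := fun a =>
      Finset.inf'_le _ (Finset.mem_univ a)
    have hmem : q + ε • v ∈ Wstar := by
      rw [hW]
      refine ⟨?_, ?_⟩
      · rw [hΔ]
        constructor
        · intro a
          have h1 : ε * |v a| ≤ q a := by
            have h2 : ε * (|v a| + 1) ≤ q a :=
              (le_div_iff₀ (by positivity)).mp (hεle a)
            nlinarith [abs_nonneg (v a), hεpos.le]
          have h3 : -(ε * |v a|) ≤ ε * v a := by
            have := neg_abs_le (v a)
            nlinarith [hεpos.le]
          have : 0 ≤ q a + ε * v a := by linarith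
          simpa [Pi.add_apply, Pi.smul_apply, smul_eq_mul] using this
        · intro i
          have hqΔ : q ∈ Δset := by rw [hW] at hq; exact hq.1
          rw [hΔ] at hqΔ
          have hvsum : ∑ α : A i, v ⟨i, α⟩ = 0 := (hZ v).mp hvZ i
          have : ∑ α : A i, (q ⟨i, α⟩ + ε * v ⟨i, α⟩)
              = (∑ α : A i, q ⟨i, α⟩) + ε * ∑ α : A i, v ⟨i, α⟩ := by
            rw [Finset.sum_add_distrib, Finset.mul_sum]
          simpa [Pi.add_apply, Pi.smul_apply, smul_eq_mul, hqΔ.2 i, hvsum] using this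
      · have hPq : P q = ystar := by rw [hW] at hq; exact hq.2
        have : P v = 0 := hvP
        simp [map_add, map_smul, hPq, this]
    have hdiffmem : ε • v ∈ vectorSpan ℝ Wstar := by
      have := vsub_mem_vectorSpan ℝ hmem hq
      simpa using this
    have : v = ε⁻¹ • (ε • v) := by
      rw [smul_smul, inv_mul_cancel₀ (ne_of_gt hεpos), one_smul]
    rw [this]
    exact Submodule.smul_mem _ _ hdiffmem
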